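/- Let x̃, ψ̃ : [a,b] → ℝ^n be continuously differentiable and ũ : [a,b] → ℝ^m be continuous. Suppose that for every h₁ ∈ C¹([a,b];ℝ^n) with h₁(a) = h₁(b) = 0, every continuous h₂ : [a,b] → ℝ^m, and every h₃ ∈ C¹([a,b];ℝ^n), one has ∫ₐᵇ [ ⟨∇ₓH, h₁(t)⟩ + ⟨∇ᵤH, h₂(t)⟩ + ⟨∇_ψH, h₃(t)⟩ − ⟨h₃(t), x̃′(t)⟩ − ⟨ψ̃(t), h₁′(t)⟩ ] dt = 0, where the partial gradients of H are evaluated at (t, x̃(t), ũ(t), ψ̃(t)). Then the Pontryagin conditions hold for every t ∈ [a,b]: the control system x̃′(t) = ∇_ψH(t,x̃(t),ũ(t),ψ̃(t)) = φ(t,x̃(t),ũ(t)); the adjoint system ψ̃′(t) = −∇ₓH(t,x̃(t),ũ(t),ψ̃(t)); and the maximality condition ∇ᵤH(t,x̃(t),ũ(t),ψ̃(t)) = 0. -/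

import Mathlib

open MeasureTheory Set RealInnerProductSpace

noncomputable section

/-- Euclidean space `ℝ^k`. -/
abbrev Vec (k : ℕ) : Type := EuclideanSpace ℝ (Fin k)

/-- The Hamiltonian `H(t,x,u,ψ) = -L(t,x,u) + ⟨ψ, φ(t,x,u)⟩`. -/
def Ham {n m : ℕ} (L : ℝ → Vec n → Vec m → ℝ) (φ : ℝ → Vec n → Vec m → Vec n) :
    ℝ → Vec n → Vec m → Vec n → ℝ :=
  fun t x u ψ => -L t x u + ⟪ψ, φ t x u⟫

/-- Partial derivative `∂H/∂t`. -/
def Hpt {n m : ℕ} (H : ℝ → Vec n → Vec m → Vec n → ℝ)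
    (t : ℝ) (x : Vec n) (u : Vec m) (ψ : Vec n) : ℝ :=
  deriv (fun s => H s x u ψ) t

/-- Partial gradient `∇ₓH`. -/
def Hpx {n m : ℕ} (H : ℝ → Vec n → Vec m → Vec n → ℝ)
    (t : ℝ) (x : Vec n) (u : Vec m) (ψ : Vec n) : Vec n :=
  gradient (fun y => H t y u ψ) x

/-- Partial gradient `∇ᵤH`. -/
def Hpu {n m : ℕ} (H : ℝ → Vec n → Vec m → Vec n → ℝ)
    (t : ℝ) (x : Vec n) (u : Vec m) (ψ : Vec n) : Vec m :=
  gradient (fun v => H t x v ψ) u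

/-- Partial gradient `∇_ψH`. -/
def Hpψ {n m : ℕ} (H : ℝ → Vec n → Vec m → Vec n → ℝ)
    (t : ℝ) (x : Vec n) (u : Vec m) (ψ : Vec n) : Vec n :=
  gradient (fun q => H t x u q) ψ

/-! ### Auxiliary lemmas -/

open InnerProductSpace in
/-- Fundamental lemma of the calculus of variations on `[a,b]`, for continuous vector-valued
functions, tested against `C¹` functions supported in `(a,b)`. -/
private lemma fund_lemma {k : ℕ} {a b : ℝ} (hab : a < b) {g : ℝ → Vec k}
    (hg : ContinuousOn g (Icc a b))
    (hint : ∀ h : ℝ → Vec k, ContDiff ℝ 1 h → (∀ t, t ∉ Ioo a b → h t = 0) →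
      ∫ t in a..b, ⟪g t, h t⟫ = 0) :
    ∀ t ∈ Icc a b, g t = 0 := by
  have hIoo : ∀ t ∈ Ioo a b, g t = 0 := by
    intro t₀ ht₀
    by_contra hne
    set c := g t₀ with hc
    have hcn : ‖c‖ ≠ 0 := norm_ne_zero_iff.mpr hne
    have hcpos : (0:ℝ) < ‖c‖ ^ 2 := by positivity
    have hIccn : Icc a b ∈ nhds t₀ := Icc_mem_nhds ht₀.1 ht₀.2
    have hgat : ContinuousAt g t₀ :=
      (hg t₀ (Ioo_subset_Icc_self ht₀)).continuousAt hIccn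
    have hct : ContinuousAt (fun t => ⟪g t, c⟫) t₀ := hgat.inner continuousAt_const
    have hev : ∀ᶠ t in nhds t₀, ‖c‖ ^ 2 / 2 < ⟪g t, c⟫ := by
      have h0 : ⟪g t₀, c⟫ = ‖c‖ ^ 2 := real_inner_self_eq_norm_sq c
      exact hct (Ioi_mem_nhds (show ‖c‖ ^ 2 / 2 < ⟪g t₀, c⟫ by rw [h0]; linarith))
    have hev2 : ∀ᶠ t in nhds t₀, (‖c‖ ^ 2 / 2 < ⟪g t, c⟫ ∧ t ∈ Ioo a b) :=
      hev.and (isOpen_Ioo.eventually_mem ht₀)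
    obtain ⟨δ, hδpos, hball⟩ := Metric.eventually_nhds_iff_ball.mp hev2
    set f : ContDiffBump t₀ := ⟨δ/2, δ, by positivity, by linarith⟩ with hf
    have hsupp : ∀ t, t ∉ Ioo a b → f t • c = 0 := by
      intro t htn
      have : t ∉ Metric.ball t₀ δ := fun hm => htn (hball t hm).2
      have : f t = 0 := by
        rw [← Function.notMem_support, f.support_eq]; exact this
      simp [this]
    have hcd : ContDiff ℝ 1 (fun t => f t • c) := f.contDiff.smul contDiff_const
    have hzero := hint (fun t => f t • c) hcd hsupp
    set F : ℝ → ℝ := fun t => f t * ⟪g t, c⟫ with hF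
    have hFint : IntegrableOn F (Ioc a b) := by
      have : ContinuousOn F (Icc a b) :=
        (f.continuous.continuousOn).mul (hg.inner continuousOn_const)
      exact (this.integrableOn_Icc).mono_set Ioc_subset_Icc_self
    have hFnn : ∀ t, 0 ≤ F t := by
      intro t
      by_cases hm : t ∈ Metric.ball t₀ δ
      · exact mul_nonneg f.nonneg (le_of_lt (lt_trans (by positivity) (hball t hm).1))
      · have : f t = 0 := by rw [← Function.notMem_support, f.support_eq]; exact hm
        simp [hF, this]
    have hzero' : ∫ t in Ioc a b, F t = 0 := by
      rw [← intervalIntegral.integral_of_le hab.le]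
      rw [← hzero]
      apply intervalIntegral.integral_congr
      intro t _
      show F t = ⟪g t, f t • c⟫
      rw [real_inner_smul_right]
    have hpos : 0 < ∫ t in Ioc a b, F t := by
      rw [setIntegral_pos_iff_support_of_nonneg_ae
        (Filter.Eventually.of_forall hFnn) hFint]
      have hsub : Metric.ball t₀ (δ/2) ⊆ Function.support F ∩ Ioc a b := by
        intro t htm
        have htm' : t ∈ Metric.ball t₀ δ :=
          Metric.ball_subset_ball (by linarith) htm
        constructor
        · have h1 : 0 < f t := f.pos_of_mem_ball (by simpa [hf] using htm')
          have h2 : (0:ℝ) < ⟪g t, c⟫ := lt_trans (by positivity) (hball t htm').1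
          exact ne_of_gt (mul_pos h1 h2)
        · exact Ioo_subset_Ioc_self (hball t htm').2
      calc (0:ENNReal) < volume (Metric.ball t₀ (δ/2)) := by
            simpa using Metric.measure_ball_pos volume t₀ (by linarith : (0:ℝ) < δ/2)
        _ ≤ _ := measure_mono hsub
    exact absurd hzero' (ne_of_gt hpos)
  intro t ht
  have hmem : t ∈ closure (Ioo a b) := by rwa [closure_Ioo hab.ne]
  haveI : (nhdsWithin t (Ioo a b)).NeBot := mem_closure_iff_nhdsWithin_neBot.mp hmem
  have h1 : Filter.Tendsto g (nhdsWithin t (Ioo a b)) (nhds (g t)) :=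
    (hg.continuousWithinAt ht).mono Ioo_subset_Icc_self
  have h2 : Filter.Tendsto g (nhdsWithin t (Ioo a b)) (nhds 0) := by
    apply Filter.Tendsto.congr' _ tendsto_const_nhds
    filter_upwards [self_mem_nhdsWithin] with s hs
    exact (hIoo s hs).symm
  exact tendsto_nhds_unique h1 h2

open InnerProductSpace in
private lemma grad_affine {E W : Type*} [NormedAddCommGroup E] [InnerProductSpace ℝ E]
    [CompleteSpace E] [NormedAddCommGroup W] [NormedSpace ℝ W]
    (G : W → ℝ) (hG : ContDiff ℝ 1 G) (A : E → W) (J : E →L[ℝ] W) (e : E)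
    (hA : HasFDerivAt A J e) :
    gradient (fun y => G (A y)) e = (toDual ℝ E).symm ((fderiv ℝ G (A e)).comp J) := by
  unfold gradient
  congr 1
  exact (((hG.differentiable one_ne_zero) (A e)).hasFDerivAt.comp e hA).fderiv

open InnerProductSpace in
/-- The gradient of the Hamiltonian in the adjoint variable is `φ`. -/
private lemma hpsi_eq {n m : ℕ} (L : ℝ → Vec n → Vec m → ℝ) (φ : ℝ → Vec n → Vec m → Vec n)
    (t : ℝ) (x : Vec n) (u : Vec m) (ψ : Vec n) :
    Hpψ (Ham L φ) t x u ψ = φ t x u := by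
  unfold Hpψ Ham gradient
  have h1 : (fun q : Vec n => -L t x u + ⟪q, φ t x u⟫) =
      fun q : Vec n => -L t x u + (innerSL ℝ (φ t x u)) q := by
    funext q
    simp [real_inner_comm, mul_comm]
  rw [h1]
  have h2 : fderiv ℝ (fun q : Vec n => -L t x u + (innerSL ℝ (φ t x u)) q) ψ =
      innerSL ℝ (φ t x u) := by
    have := ((innerSL ℝ (φ t x u)).hasFDerivAt (x := ψ)).const_add (-L t x u)
    exact this.fderiv
  rw [h2]
  have h3 : innerSL ℝ (φ t x u) = toDual ℝ (Vec n) (φ t x u) := by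
    ext y
    simp [toDual_apply_apply]
  rw [h3, LinearIsometryEquiv.symm_apply_apply]

/-- The total phase space `ℝ × ℝ^n × ℝ^m × ℝ^n`. -/
private abbrev Pspace (n m : ℕ) := ℝ × Vec n × Vec m × Vec n

/-- The Hamiltonian as a function of one (bundled) variable. -/
private def Ffull {n m : ℕ} (L : ℝ → Vec n → Vec m → ℝ) (φ : ℝ → Vec n → Vec m → Vec n) :
    Pspace n m → ℝ := fun p => Ham L φ p.1 p.2.1 p.2.2.1 p.2.2.2

private lemma hFfull {n m : ℕ} {L : ℝ → Vec n → Vec m → ℝ} {φ : ℝ → Vec n → Vec m → Vec n}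
    (hL : ContDiff ℝ 1 (fun p : ℝ × Vec n × Vec m => L p.1 p.2.1 p.2.2))
    (hφ : ContDiff ℝ 1 (fun p : ℝ × Vec n × Vec m => φ p.1 p.2.1 p.2.2)) :
    ContDiff ℝ 1 (Ffull L φ) := by
  have hπ : ContDiff ℝ 1 (fun p : Pspace n m => (p.1, p.2.1, p.2.2.1)) := by fun_prop
  have h1 : ContDiff ℝ 1 (fun p : Pspace n m => L p.1 p.2.1 p.2.2.1) := hL.comp hπ
  have h2 : ContDiff ℝ 1 (fun p : Pspace n m => φ p.1 p.2.1 p.2.2.1) := hφ.comp hπ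
  have h3 : ContDiff ℝ 1 (fun p : Pspace n m => p.2.2.2) := by fun_prop
  exact (h1.neg).add (ContDiff.inner ℝ h3 h2)

private def Jx (n m : ℕ) : Vec n →L[ℝ] Pspace n m :=
  (0 : Vec n →L[ℝ] ℝ).prod ((ContinuousLinearMap.id ℝ (Vec n)).prod 0)

private def Ju (n m : ℕ) : Vec m →L[ℝ] Pspace n m :=
  (0 : Vec m →L[ℝ] ℝ).prod ((0 : Vec m →L[ℝ] Vec n).prod
    ((ContinuousLinearMap.id ℝ (Vec m)).prod 0))

open InnerProductSpace in
private lemma hpx_eq {n m : ℕ} (L : ℝ → Vec n → Vec m → ℝ) (φ : ℝ → Vec n → Vec m → Vec n)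
    (hF : ContDiff ℝ 1 (Ffull L φ)) (t : ℝ) (x : Vec n) (u : Vec m) (ψ : Vec n) :
    Hpx (Ham L φ) t x u ψ =
      (toDual ℝ (Vec n)).symm ((fderiv ℝ (Ffull L φ) (t, x, u, ψ)).comp (Jx n m)) := by
  have hA : HasFDerivAt (fun y : Vec n => ((t, y, u, ψ) : Pspace n m)) (Jx n m) x :=
    (hasFDerivAt_const t x).prodMk ((hasFDerivAt_id x).prodMk (hasFDerivAt_const (u, ψ) x))
  exact grad_affine (Ffull L φ) hF _ _ x hA

open InnerProductSpace in
private lemma hpu_eq {n m : ℕ} (L : ℝ → Vec n → Vec m → ℝ) (φ : ℝ → Vec n → Vec m → Vec n)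
    (hF : ContDiff ℝ 1 (Ffull L φ)) (t : ℝ) (x : Vec n) (u : Vec m) (ψ : Vec n) :
    Hpu (Ham L φ) t x u ψ =
      (toDual ℝ (Vec m)).symm ((fderiv ℝ (Ffull L φ) (t, x, u, ψ)).comp (Ju n m)) := by
  have hA : HasFDerivAt (fun v : Vec m => ((t, x, v, ψ) : Pspace n m)) (Ju n m) u :=
    (hasFDerivAt_const t u).prodMk ((hasFDerivAt_const x u).prodMk
      ((hasFDerivAt_id u).prodMk (hasFDerivAt_const ψ u)))
  exact grad_affine (Ffull L φ) hF _ _ u hA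

open InnerProductSpace in
private lemma cont_grad_comp {n m : ℕ} (L : ℝ → Vec n → Vec m → ℝ)
    (φ : ℝ → Vec n → Vec m → Vec n) {E : Type*} [NormedAddCommGroup E]
    [InnerProductSpace ℝ E] [CompleteSpace E] {s : Set ℝ}
    (hF : ContDiff ℝ 1 (Ffull L φ)) (J : E →L[ℝ] Pspace n m)
    {curve : ℝ → Pspace n m} (hc : ContinuousOn curve s) :
    ContinuousOn (fun t => (toDual ℝ E).symm ((fderiv ℝ (Ffull L φ) (curve t)).comp J)) s := by
  have h1 : Continuous (fderiv ℝ (Ffull L φ)) := hF.continuous_fderiv one_ne_zero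
  have h2 : Continuous (fun A : Pspace n m →L[ℝ] ℝ => A.comp J) :=
    (continuous_id (X := Pspace n m →L[ℝ] ℝ)).clm_comp_const J
  exact ((toDual ℝ E).symm.continuous.comp (h2.comp h1)).comp_continuousOn hc

/-- From the first-variation identity (2.5), by suitable choices of the variations, the
Pontryagin conditions (2.6)–(2.8) follow: the control system, the adjoint system, and
the maximality condition. -/
theorem stmt_5 {n m : ℕ} {a b : ℝ} (hab : a < b)
    (L : ℝ → Vec n → Vec m → ℝ) (φ : ℝ → Vec n → Vec m → Vec n)
    (hL : ContDiff ℝ 1 (fun p : ℝ × Vec n × Vec m => L p.1 p.2.1 p.2.2))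
    (hφ : ContDiff ℝ 1 (fun p : ℝ × Vec n × Vec m => φ p.1 p.2.1 p.2.2))
    (xe ψe : ℝ → Vec n) (ue : ℝ → Vec m)
    (hxe : ContDiffOn ℝ 1 xe (Icc a b)) (hψe : ContDiffOn ℝ 1 ψe (Icc a b))
    (hue : ContinuousOn ue (Icc a b))
    -- the first-variation identity, for all admissible variations
    (hfv : ∀ (h₁ h₃ : ℝ → Vec n) (h₂ : ℝ → Vec m),
      ContDiffOn ℝ 1 h₁ (Icc a b) → ContinuousOn h₂ (Icc a b) →
      ContDiffOn ℝ 1 h₃ (Icc a b) → h₁ a = 0 → h₁ b = 0 →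
      ∫ t in a..b,
        (⟪Hpx (Ham L φ) t (xe t) (ue t) (ψe t), h₁ t⟫
          + ⟪Hpu (Ham L φ) t (xe t) (ue t) (ψe t), h₂ t⟫
          + ⟪Hpψ (Ham L φ) t (xe t) (ue t) (ψe t), h₃ t⟫
          - ⟪h₃ t, derivWithin xe (Icc a b) t⟫
          - ⟪ψe t, derivWithin h₁ (Icc a b) t⟫) = 0) :
    ∀ t ∈ Icc a b,
      -- the control system
      (derivWithin xe (Icc a b) t = Hpψ (Ham L φ) t (xe t) (ue t) (ψe t)
        ∧ Hpψ (Ham L φ) t (xe t) (ue t) (ψe t) = φ t (xe t) (ue t))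
      -- the adjoint system
      ∧ derivWithin ψe (Icc a b) t = -Hpx (Ham L φ) t (xe t) (ue t) (ψe t)
      -- the maximality condition
      ∧ Hpu (Ham L φ) t (xe t) (ue t) (ψe t) = 0 := by
  have hF : ContDiff ℝ 1 (Ffull L φ) := hFfull hL hφ
  have hcurve : ContinuousOn (fun t => ((t, xe t, ue t, ψe t) : Pspace n m)) (Icc a b) :=
    (continuous_id.continuousOn).prodMk
      (hxe.continuousOn.prodMk (hue.prodMk hψe.continuousOn))
  -- continuity of the three gradient curves
  have hg1 : ContinuousOn (fun t => Hpx (Ham L φ) t (xe t) (ue t) (ψe t)) (Icc a b) := by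
    refine ContinuousOn.congr (cont_grad_comp L φ hF (Jx n m) hcurve) ?_
    intro t _
    exact hpx_eq L φ hF t (xe t) (ue t) (ψe t)
  have hg2 : ContinuousOn (fun t => Hpu (Ham L φ) t (xe t) (ue t) (ψe t)) (Icc a b) := by
    refine ContinuousOn.congr (cont_grad_comp L φ hF (Ju n m) hcurve) ?_
    intro t _
    exact hpu_eq L φ hF t (xe t) (ue t) (ψe t)
  have hg3 : ContinuousOn (fun t => Hpψ (Ham L φ) t (xe t) (ue t) (ψe t)) (Icc a b) := by
    have : ContinuousOn (fun t => φ t (xe t) (ue t)) (Icc a b) :=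
      hφ.continuous.comp_continuousOn
        ((continuous_id.continuousOn).prodMk (hxe.continuousOn.prodMk hue))
    refine ContinuousOn.congr this ?_
    intro t _
    exact hpsi_eq L φ t (xe t) (ue t) (ψe t)
  have hxd : ContinuousOn (fun t => derivWithin xe (Icc a b) t) (Icc a b) :=
    hxe.continuousOn_derivWithin (uniqueDiffOn_Icc hab) le_rfl
  have hψd : ContinuousOn (fun t => derivWithin ψe (Icc a b) t) (Icc a b) :=
    hψe.continuousOn_derivWithin (uniqueDiffOn_Icc hab) le_rfl
  -- Part 1 : the control system
  have hctrl : ∀ t ∈ Icc a b,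
      (fun t => Hpψ (Ham L φ) t (xe t) (ue t) (ψe t) - derivWithin xe (Icc a b) t) t = 0 := by
    apply fund_lemma hab (hg3.sub hxd)
    intro h hcd hvan
    have h0 := hfv (fun _ => 0) h (fun _ => 0) contDiffOn_const continuousOn_const
      hcd.contDiffOn rfl rfl
    rw [← h0]
    apply intervalIntegral.integral_congr
    intro t ht
    rw [uIcc_of_le hab.le] at ht
    have hz : derivWithin (fun _ : ℝ => (0 : Vec n)) (Icc a b) t = 0 :=
      congrFun (derivWithin_const _ _) t
    simp only [hz, Pi.sub_apply, inner_zero_right, inner_zero_left, inner_sub_left, add_zero, zero_add, sub_zero]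
    rw [real_inner_comm (h t) (derivWithin xe (Icc a b) t)]
  -- Part 3 : the maximality condition
  have hmax : ∀ t ∈ Icc a b,
      (fun t => Hpu (Ham L φ) t (xe t) (ue t) (ψe t)) t = 0 := by
    apply fund_lemma hab hg2
    intro h hcd hvan
    have h0 := hfv (fun _ => 0) (fun _ => 0) h contDiffOn_const hcd.continuous.continuousOn
      contDiffOn_const rfl rfl
    rw [← h0]
    apply intervalIntegral.integral_congr
    intro t ht
    rw [uIcc_of_le hab.le] at ht
    have hz : derivWithin (fun _ : ℝ => (0 : Vec n)) (Icc a b) t = 0 :=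
      congrFun (derivWithin_const _ _) t
    simp only [hz, inner_zero_right, inner_zero_left, add_zero, zero_add, sub_zero]
  -- integration by parts
  have hibp : ∀ h : ℝ → Vec n, ContDiff ℝ 1 h → h a = 0 → h b = 0 →
      ∫ t in a..b, (⟪ψe t, deriv h t⟫ + ⟪derivWithin ψe (Icc a b) t, h t⟫) = 0 := by
    intro h hc ha0 hb0
    have key := intervalIntegral.integral_eq_sub_of_hasDeriv_right_of_le hab.le
      (f := fun t => ⟪ψe t, h t⟫)
      (f' := fun t => ⟪ψe t, deriv h t⟫ + ⟪derivWithin ψe (Icc a b) t, h t⟫)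
      ?_ ?_ ?_
    · rw [key]
      simp [ha0, hb0]
    · exact hψe.continuousOn.inner hc.continuous.continuousOn
    · intro x hx
      have hne : Icc a b ∈ nhds x := Icc_mem_nhds hx.1 hx.2
      have hψdr : HasDerivAt ψe (derivWithin ψe (Icc a b) x) x := by
        have hd := ((hψe.differentiableOn one_ne_zero) x (Ioo_subset_Icc_self hx)).differentiableAt hne
        rw [derivWithin_of_mem_nhds hne]
        exact hd.hasDerivAt
      have hhd : HasDerivAt h (deriv h x) x := (hc.differentiable one_ne_zero x).hasDerivAt
      exact (hψdr.inner ℝ hhd).hasDerivWithinAt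
    · apply ContinuousOn.intervalIntegrable
      rw [uIcc_of_le hab.le]
      exact (hψe.continuousOn.inner
          (hc.continuous_deriv le_rfl).continuousOn).add
        (hψd.inner hc.continuous.continuousOn)
  -- Part 2 : the adjoint system
  have hadj : ∀ t ∈ Icc a b,
      (fun t => Hpx (Ham L φ) t (xe t) (ue t) (ψe t) + derivWithin ψe (Icc a b) t) t = 0 := by
    apply fund_lemma hab (hg1.add hψd)
    intro h hcd hvan
    have ha0 : h a = 0 := hvan a (by simp)
    have hb0 : h b = 0 := hvan b (by simp)
    have h0 := hfv h (fun _ => 0) (fun _ => 0) hcd.contDiffOn continuousOn_const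
      contDiffOn_const ha0 hb0
    have h0' : ∫ t in a..b,
        (⟪Hpx (Ham L φ) t (xe t) (ue t) (ψe t), h t⟫ - ⟪ψe t, deriv h t⟫) = 0 := by
      rw [← h0]
      apply intervalIntegral.integral_congr
      intro t ht
      rw [uIcc_of_le hab.le] at ht
      have hdw : derivWithin h (Icc a b) t = deriv h t :=
        ((hcd.differentiable one_ne_zero) t).derivWithin (uniqueDiffOn_Icc hab t ht)
      simp only [hdw, inner_zero_right, add_zero, zero_add, sub_zero, inner_zero_left]
    have hsum := hibp h hcd ha0 hb0
    have hintg1 : IntervalIntegrable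
        (fun t => ⟪Hpx (Ham L φ) t (xe t) (ue t) (ψe t), h t⟫ - ⟪ψe t, deriv h t⟫)
        volume a b := by
      apply ContinuousOn.intervalIntegrable
      rw [uIcc_of_le hab.le]
      exact (hg1.inner hcd.continuous.continuousOn).sub
        (hψe.continuousOn.inner (hcd.continuous_deriv le_rfl).continuousOn)
    have hintg2 : IntervalIntegrable
        (fun t => ⟪ψe t, deriv h t⟫ + ⟪derivWithin ψe (Icc a b) t, h t⟫) volume a b := by
      apply ContinuousOn.intervalIntegrable
      rw [uIcc_of_le hab.le]
      exact (hψe.continuousOn.inner (hcd.continuous_deriv le_rfl).continuousOn).add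
        (hψd.inner hcd.continuous.continuousOn)
    calc ∫ t in a..b, ⟪Hpx (Ham L φ) t (xe t) (ue t) (ψe t)
            + derivWithin ψe (Icc a b) t, h t⟫
        = ∫ t in a..b,
            ((⟪Hpx (Ham L φ) t (xe t) (ue t) (ψe t), h t⟫ - ⟪ψe t, deriv h t⟫)
              + (⟪ψe t, deriv h t⟫ + ⟪derivWithin ψe (Icc a b) t, h t⟫)) := by
          apply intervalIntegral.integral_congr
          intro t _
          simp only [inner_add_left]
          ring
      _ = 0 := by
          rw [intervalIntegral.integral_add hintg1 hintg2, h0', hsum, add_zero]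
  -- assemble
  intro t ht
  refine ⟨⟨?_, hpsi_eq L φ t (xe t) (ue t) (ψe t)⟩, ?_, hmax t ht⟩
  · exact (sub_eq_zero.mp (hctrl t ht)).symm
  · have h := hadj t ht
    simp only at h
    rw [add_comm] at h
    exact add_eq_zero_iff_eq_neg.mp h
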